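/- Classical involution of interpolated Hamiltonians (rank-1 case of the general result): on ℂ-valued coordinates (λ_1, μ_1, ..., λ_n, μ_n) with Poisson bracket {λ_k, λ_l} = 0, {μ_k, λ_l} = μ_k δ_{kl}, {μ_k, μ_l} = 0, define H_0,...,H_{n−1} as the coefficients (besides the fixed leading part) of t(λ) = (λ + Σ_i λ_i)∏_i (λ − λ_i) + Σ_i ∏_{j≠i} (λ − λ_j)/(λ_i − λ_j) · (μ_i + μ_i^{-1}), i.e., t(λ) = λ^{n+1} + 0·λ^n + Σ_{j=0}^{n−1} H_j λ^j. Then {H_i, H_j} = 0 for all i, j. -/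

import Mathlib

open Finset Polynomial


section CMap

variable {A : Type*} [CommRing A]

/-- Coefficientwise application of a map `f : A → A` to a polynomial. -/
noncomputable def cmap (f : A → A) (q : Polynomial A) : Polynomial A :=
  q.sum fun k a => C (f a) * X ^ k

variable (f : A → A)

lemma f_zero (hadd : ∀ x y, f (x + y) = f x + f y) : f 0 = 0 := by
  have := hadd 0 0; simpa using this

lemma f_neg (hadd : ∀ x y, f (x + y) = f x + f y) (x : A) : f (-x) = - f x := by
  have := hadd x (-x); simp [f_zero f hadd] at this
  exact eq_neg_of_add_eq_zero_right this.symm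

lemma f_one (hleib : ∀ x y, f (x * y) = x * f y + y * f x) : f 1 = 0 := by
  have := hleib 1 1; simpa using this

lemma f_finsum (hadd : ∀ x y, f (x + y) = f x + f y) {ι : Type*} (s : Finset ι) (g : ι → A) :
    f (∑ i ∈ s, g i) = ∑ i ∈ s, f (g i) :=
  map_sum (AddMonoidHom.mk' f hadd) g s

variable (hadd : ∀ x y, f (x + y) = f x + f y)
  (hleib : ∀ x y, f (x * y) = x * f y + y * f x)

include hadd

lemma cmap_coeff (q : Polynomial A) (k : ℕ) : (cmap f q).coeff k = f (q.coeff k) := by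
  classical
  simp only [cmap, Polynomial.sum, finset_sum_coeff, coeff_C_mul, coeff_X_pow, mul_ite, mul_one,
    mul_zero]
  rw [Finset.sum_ite_eq q.support k (fun n => f (q.coeff n))]
  by_cases h : k ∈ q.support
  · simp [h]
  · simp [h, Polynomial.notMem_support_iff.mp h, f_zero f hadd]

lemma cmap_add (p q : Polynomial A) : cmap f (p + q) = cmap f p + cmap f q := by
  ext k; simp [cmap_coeff f hadd, hadd]

lemma cmap_C (a : A) : cmap f (C a) = C (f a) := by
  ext k
  rcases eq_or_ne k 0 with rfl | h
  · simp [cmap_coeff f hadd]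
  · simp [cmap_coeff f hadd, coeff_C, h, f_zero f hadd]

lemma cmap_neg (p : Polynomial A) : cmap f (-p) = - cmap f p := by
  ext k; simp [cmap_coeff f hadd, f_neg f hadd]

lemma cmap_sub (p q : Polynomial A) : cmap f (p - q) = cmap f p - cmap f q := by
  rw [sub_eq_add_neg, cmap_add f hadd, cmap_neg f hadd, sub_eq_add_neg]

lemma cmap_finsum {ι : Type*} (s : Finset ι) (g : ι → Polynomial A) :
    cmap f (∑ i ∈ s, g i) = ∑ i ∈ s, cmap f (g i) := by
  classical
  induction s using Finset.induction_on with
  | empty => ext k; rw [cmap_coeff f hadd]; simp [f_zero f hadd]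
  | @insert a s ha ih => rw [Finset.sum_insert ha, Finset.sum_insert ha, cmap_add f hadd, ih]

include hleib

lemma cmap_X : cmap f X = 0 := by
  ext k
  rcases eq_or_ne k 1 with rfl | h
  · simp [cmap_coeff f hadd, f_one f hleib]
  · simp [cmap_coeff f hadd, coeff_X, Ne.symm h, f_zero f hadd, h]

lemma cmap_mul (p q : Polynomial A) :
    cmap f (p * q) = p * cmap f q + q * cmap f p := by
  ext k
  rw [coeff_add, coeff_mul, mul_comm q (cmap f p), coeff_mul, cmap_coeff f hadd, coeff_mul,
    f_finsum f hadd, ← Finset.sum_add_distrib]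
  refine Finset.sum_congr rfl fun x hx => ?_
  rw [cmap_coeff f hadd, cmap_coeff f hadd, hleib]
  ring

lemma cmap_prod {ι : Type*} [DecidableEq ι] (s : Finset ι) (g : ι → Polynomial A) :
    cmap f (∏ i ∈ s, g i) = ∑ i ∈ s, cmap f (g i) * ∏ l ∈ s.erase i, g l := by
  induction s using Finset.induction_on with
  | empty =>
      have h1 : (1 : Polynomial A) = C 1 := by simp
      rw [Finset.prod_empty, h1, cmap_C f hadd, f_one f hleib]
      simp
  | @insert a s ha ih =>
      rw [Finset.prod_insert ha, cmap_mul f hadd hleib, ih, Finset.sum_insert ha,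
        Finset.erase_insert ha]
      simp only [Finset.mul_sum]
      rw [add_comm]
      refine congrArg₂ (· + ·) (mul_comm _ _) ?_
      refine Finset.sum_congr rfl fun x hx => ?_
      rw [Finset.erase_insert_of_ne (by rintro rfl; exact ha hx),
        Finset.prod_insert (fun h => ha (Finset.mem_of_mem_erase h))]
      ring

end CMap

section Generic
variable {A : Type*} [CommRing A] {n : ℕ}

/-- auxiliary scalar `β i j`. -/
noncomputable def bet (u : Fin n → Fin n → A) (i j : Fin n) : A :=
  u i j ^ 2 * ∏ l ∈ (univ.erase i).erase j, u i l

/-- auxiliary scalar `e k`, the "λ_k-gradient" of `T` divided by `H k`. -/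
noncomputable def ek (lam mu muinv : Fin n → A) (u : Fin n → Fin n → A) (k : Fin n) : A :=
  -(lam k + ∑ i, lam i) + (∑ i ∈ univ.erase k, (mu i + muinv i) * bet u i k)
    - (mu k + muinv k) * ∑ j ∈ univ.erase k, bet u k j

lemma sum_erase_comm {M : Type*} [AddCommGroup M] {ι : Type*} [Fintype ι] [DecidableEq ι]
    (F : ι → ι → M) :
    ∑ i, ∑ j ∈ univ.erase i, F i j = ∑ j, ∑ i ∈ univ.erase j, F i j := by
  have h1 : ∀ i : ι, ∑ j ∈ univ.erase i, F i j = (∑ j, F i j) - F i i := fun i =>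
    Finset.sum_erase_eq_sub (mem_univ i)
  have h2 : ∀ j : ι, ∑ i ∈ univ.erase j, F i j = (∑ i, F i j) - F j j := fun j =>
    Finset.sum_erase_eq_sub (mem_univ j)
  simp only [h1, h2, Finset.sum_sub_distrib]
  rw [Finset.sum_comm]

lemma generic (lam mu muinv : Fin n → A) (u : Fin n → Fin n → A)
    (hu : ∀ i j : Fin n, i ≠ j → (lam i - lam j) * u i j = 1)
    (f : A → A) (hadd : ∀ x y, f (x + y) = f x + f y)
    (hleib : ∀ x y, f (x * y) = x * f y + y * f x)
    (α γ : Fin n → A)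
    (hflam : ∀ l, f (lam l) = α l)
    (hfu : ∀ i j : Fin n, i ≠ j → f (u i j) = -(u i j ^ 2 * (α i - α j)))
    (hfm : ∀ i, f (mu i + muinv i) = γ i) :
    cmap f ((X + C (∑ i, lam i)) * ∏ i, (X - C (lam i)) +
        ∑ i, (∏ j ∈ univ.erase i, ((X - C (lam j)) * C (u i j))) * C (mu i + muinv i))
      = (∑ k, C (α k * ek lam mu muinv u k) * ∏ l ∈ univ.erase k, (X - C (lam l)))
        + ∑ i, (∏ j ∈ univ.erase i, ((X - C (lam j)) * C (u i j))) * C (γ i) := by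
  classical
  set s : A := ∑ i, lam i with hs
  set H : Fin n → Polynomial A := fun k => ∏ l ∈ univ.erase k, (X - C (lam l)) with hH
  set G : Fin n → Polynomial A := fun i => ∏ j ∈ univ.erase i, ((X - C (lam j)) * C (u i j))
    with hG
  -- step 1 : the leading term
  have hA0 : cmap f ((X + C s) * ∏ i, (X - C (lam i)))
      = ∑ k, C (α k * (-(lam k + s))) * H k := by
    rw [cmap_mul f hadd hleib]
    have h1 : cmap f (X + C s) = C (∑ i, α i) := by
      rw [cmap_add f hadd, cmap_X f hadd hleib, cmap_C f hadd, f_finsum f hadd]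
      simp [hflam]
    have h2 : cmap f (∏ i, (X - C (lam i))) = ∑ k, -C (α k) * H k := by
      rw [cmap_prod f hadd hleib]
      refine Finset.sum_congr rfl fun k _ => ?_
      rw [cmap_sub f hadd, cmap_X f hadd hleib, cmap_C f hadd, hflam]
      ring
    rw [h1, h2, Finset.mul_sum, map_sum C α univ,
      Finset.mul_sum (univ : Finset (Fin n)) (fun x => C (α x)) (∏ i, (X - C (lam i))),
      ← Finset.sum_add_distrib]
    refine Finset.sum_congr rfl fun k _ => ?_
    rw [← Finset.mul_prod_erase univ _ (mem_univ k)]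
    simp only [map_mul, map_neg, map_add]
    ring
  -- step 2 : the interpolation polynomials
  have hGd : ∀ i : Fin n, cmap f (G i)
      = ∑ j ∈ univ.erase i, C (bet u i j) * (C (α j) * H j - C (α i) * H i) := by
    intro i
    rw [hG, cmap_prod f hadd hleib]
    refine Finset.sum_congr rfl fun j hj => ?_
    have hij : i ≠ j := fun h => (Finset.ne_of_mem_erase hj) h.symm
    have hji : j ≠ i := Finset.ne_of_mem_erase hj
    -- the atom
    have hatom : cmap f ((X - C (lam j)) * C (u i j))
        = C (u i j ^ 2) * (C (α j) * (X - C (lam i)) - C (α i) * (X - C (lam j))) := by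
      rw [cmap_mul f hadd hleib, cmap_C f hadd, cmap_sub f hadd, cmap_X f hadd hleib,
        cmap_C f hadd, hflam, hfu i j hij]
      have hC : (C (lam i) - C (lam j)) * C (u i j) = 1 := by
        rw [← C_sub, ← C_mul, hu i j hij, C_1]
      simp only [map_neg, map_mul, map_pow, map_sub]
      linear_combination (C (α j) * C (u i j)) * hC
    rw [hatom]
    -- split the remaining product
    have hsplit : ∏ l ∈ (univ.erase i).erase j, ((X - C (lam l)) * C (u i l))
        = (∏ l ∈ (univ.erase i).erase j, (X - C (lam l))) * C (∏ l ∈ (univ.erase i).erase j, u i l) := by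
      rw [Finset.prod_mul_distrib, map_prod]
    have hHj : (X - C (lam i)) * ∏ l ∈ (univ.erase i).erase j, (X - C (lam l)) = H j := by
      simp only [hH]
      rw [Finset.erase_right_comm]
      exact Finset.mul_prod_erase (univ.erase j) (fun l => X - C (lam l))
        (Finset.mem_erase.mpr ⟨hij, mem_univ i⟩)
    have hHi : (X - C (lam j)) * ∏ l ∈ (univ.erase i).erase j, (X - C (lam l)) = H i := by
      simp only [hH]
      exact Finset.mul_prod_erase (univ.erase i) (fun l => X - C (lam l)) hj
    rw [hsplit, bet]
    simp only [map_mul]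
    rw [← hHj, ← hHi]
    ring
  -- assemble
  rw [cmap_add f hadd, cmap_finsum f hadd, hA0]
  have h3 : ∀ i : Fin n, cmap f (G i * C (mu i + muinv i))
      = G i * C (γ i) + C (mu i + muinv i) * cmap f (G i) := by
    intro i
    rw [cmap_mul f hadd hleib, cmap_C f hadd, hfm]
  change ∑ k, C (α k * -(lam k + s)) * H k + ∑ i, cmap f (G i * C (mu i + muinv i)) =
    ∑ k, C (α k * ek lam mu muinv u k) * H k + ∑ i, G i * C (γ i)
  simp only [h3, hGd]
  rw [Finset.sum_add_distrib]
  -- now everything is sums of `C (...) * H k`; regroup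
  have key : ∑ i, C (mu i + muinv i) * ∑ j ∈ univ.erase i, C (bet u i j) *
        (C (α j) * H j - C (α i) * H i)
      = ∑ k, (C (α k * (ek lam mu muinv u k + (lam k + s)))) * H k := by
    have expand : ∀ i : Fin n, C (mu i + muinv i) * ∑ j ∈ univ.erase i, C (bet u i j) *
          (C (α j) * H j - C (α i) * H i)
        = (∑ j ∈ univ.erase i, C ((mu i + muinv i) * bet u i j * α j) * H j)
          - C (α i * ((mu i + muinv i) * ∑ j ∈ univ.erase i, bet u i j)) * H i := by
      intro i
      have hrhs : C (α i * ((mu i + muinv i) * ∑ j ∈ univ.erase i, bet u i j)) * H i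
          = ∑ j ∈ univ.erase i, C (α i * ((mu i + muinv i) * bet u i j)) * H i := by
        simp only [Finset.mul_sum, map_sum, Finset.sum_mul]
      rw [Finset.mul_sum, hrhs, ← Finset.sum_sub_distrib]
      refine Finset.sum_congr rfl fun j _ => ?_
      simp only [map_mul, map_add]
      ring
    simp only [expand]
    rw [Finset.sum_sub_distrib]
    have swap : ∑ i, ∑ j ∈ univ.erase i, C ((mu i + muinv i) * bet u i j * α j) * H j
        = ∑ k, C (α k * ∑ i ∈ univ.erase k, (mu i + muinv i) * bet u i k) * H k := by
      rw [sum_erase_comm (fun i j => C ((mu i + muinv i) * bet u i j * α j) * H j)]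
      refine Finset.sum_congr rfl fun k _ => ?_
      rw [Finset.mul_sum, map_sum, Finset.sum_mul]
      refine Finset.sum_congr rfl fun i _ => ?_
      simp only [map_mul, map_add]
      ring
    rw [swap, ← Finset.sum_sub_distrib]
    refine Finset.sum_congr rfl fun k _ => ?_
    rw [ek]
    simp only [map_mul, map_add, map_sub, map_neg]
    ring
  rw [key, add_comm (∑ i, G i * C (γ i)) _, ← add_assoc, ← Finset.sum_add_distrib]
  refine congrArg₂ (· + ·) (Finset.sum_congr rfl fun k _ => ?_) rfl
  simp only [map_mul, map_add, map_neg]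
  ring
end Generic


/-- Classical involution of the interpolated Toda Hamiltonians: the coefficients
`H_j` (for `j < n`) of
`t(λ) = (λ + Σ λ_i) ∏ (λ − λ_i) + Σ_i ∏_{j≠i} (λ − λ_j)/(λ_i − λ_j) (μ_i + μ_i⁻¹)`
Poisson-commute, for the bracket `{λ_k,λ_l}=0`, `{μ_k,λ_l}=μ_k δ_{kl}`,
`{μ_k,μ_l}=0`. -/
theorem toda_classical_hamiltonians_involution (n : ℕ) (A : Type*) [CommRing A]
    (P : A → A → A)
    (Padd : ∀ a b c : A, P (a + b) c = P a c + P b c)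
    (Pskew : ∀ a b : A, P a b = - P b a)
    (Pleib : ∀ a b c : A, P (a * b) c = a * P b c + b * P a c)
    (lam mu muinv : Fin n → A) (u : Fin n → Fin n → A)
    (hu : ∀ i j : Fin n, i ≠ j → (lam i - lam j) * u i j = 1)
    (hmuinv : ∀ i : Fin n, mu i * muinv i = 1)
    (hll : ∀ k l : Fin n, P (lam k) (lam l) = 0)
    (hml : ∀ k l : Fin n, P (mu k) (lam l) = if k = l then mu k else 0)
    (hmm : ∀ k l : Fin n, P (mu k) (mu l) = 0)
    (T : Polynomial A)
    (hT : T = (X + C (∑ i, lam i)) * ∏ i, (X - C (lam i)) +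
        ∑ i, (∏ j ∈ univ.erase i, ((X - C (lam j)) * C (u i j))) * C (mu i + muinv i)) :
    ∀ i j : ℕ, i < n → j < n → P (T.coeff i) (T.coeff j) = 0 := by
  classical
  -- basic bracket facts
  have hPaddR : ∀ a b c : A, P a (b + c) = P a b + P a c := by
    intro a b c
    rw [Pskew a (b + c), Padd, Pskew b a, Pskew c a]; ring
  have hPleibR : ∀ a b c : A, P a (b * c) = b * P a c + c * P a b := by
    intro a b c
    rw [Pskew a (b * c), Pleib, Pskew b a, Pskew c a]; ring
  have hP0r : ∀ a : A, P a 0 = 0 := by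
    intro a; have := hPaddR a 0 0; simpa using this
  have hP1r : ∀ a : A, P a 1 = 0 := by
    intro a; have := hPleibR a 1 1; simpa using this
  have hPnegR : ∀ a b : A, P a (-b) = - P a b := by
    intro a b; have := hPaddR a b (-b); simp [hP0r] at this
    exact eq_neg_of_add_eq_zero_right this.symm
  have hPsubR : ∀ a b c : A, P a (b - c) = P a b - P a c := by
    intro a b c; rw [sub_eq_add_neg, hPaddR, hPnegR, sub_eq_add_neg]
  -- cancellation helper : if x * y = 1 and x * a = b then a = y * b
  have hcancel : ∀ x y a b : A, x * y = 1 → x * a = b → a = y * b := by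
    intro x y a b h1 h2
    calc a = (x * y) * a := by rw [h1]; ring
    _ = y * (x * a) := by ring
    _ = y * b := by rw [h2]
  -- atoms
  have hlu : ∀ (k i j : Fin n), i ≠ j → P (lam k) (u i j) = 0 := by
    intro k i j hij
    have h0 : P (lam k) ((lam i - lam j) * u i j) = 0 := by rw [hu i j hij]; exact hP1r _
    rw [hPleibR] at h0
    have hd : P (lam k) (lam i - lam j) = 0 := by rw [hPsubR, hll, hll]; ring
    rw [hd] at h0
    have hx : (lam i - lam j) * P (lam k) (u i j) = 0 := by linear_combination h0
    have := hcancel _ _ _ _ (hu i j hij) hx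
    simpa using this
  have hul : ∀ (i j k : Fin n), i ≠ j → P (u i j) (lam k) = 0 := by
    intro i j k hij; rw [Pskew, hlu k i j hij]; ring
  have huu : ∀ (i j k l : Fin n), i ≠ j → k ≠ l → P (u i j) (u k l) = 0 := by
    intro i j k l hij hkl
    have h0 : P (u i j) ((lam k - lam l) * u k l) = 0 := by rw [hu k l hkl]; exact hP1r _
    rw [hPleibR] at h0
    have hd : P (u i j) (lam k - lam l) = 0 := by
      rw [hPsubR, hul i j k hij, hul i j l hij]; ring
    rw [hd] at h0
    have hx : (lam k - lam l) * P (u i j) (u k l) = 0 := by linear_combination h0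
    have := hcancel _ _ _ _ (hu k l hkl) hx
    simpa using this
  have hmu_u : ∀ (k i j : Fin n), i ≠ j → P (mu k) (u i j) =
      -(u i j ^ 2 * ((if k = i then mu k else 0) - (if k = j then mu k else 0))) := by
    intro k i j hij
    have h0 : P (mu k) ((lam i - lam j) * u i j) = 0 := by rw [hu i j hij]; exact hP1r _
    rw [hPleibR] at h0
    have hd : P (mu k) (lam i - lam j)
        = (if k = i then mu k else 0) - (if k = j then mu k else 0) := by
      rw [hPsubR, hml, hml]
    rw [hd] at h0
    have hx : (lam i - lam j) * P (mu k) (u i j)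
        = -(u i j * ((if k = i then mu k else 0) - (if k = j then mu k else 0))) := by
      linear_combination h0
    have := hcancel _ _ _ _ (hu i j hij) hx
    rw [this]; ring
  have hminv_l : ∀ (k l : Fin n), P (muinv k) (lam l) = -(if k = l then muinv k else 0) := by
    intro k l
    have h0 : P (mu k * muinv k) (lam l) = 0 := by rw [hmuinv k]; rw [Pskew]; rw [hP1r]; ring
    rw [Pleib] at h0
    have hx : mu k * P (muinv k) (lam l) = -(muinv k * (if k = l then mu k else 0)) := by
      rw [hml] at h0; linear_combination h0
    have := hcancel _ _ _ _ (hmuinv k) hx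
    rw [this]
    by_cases h : k = l
    · subst h; simp only [eq_self_iff_true, if_true]
      linear_combination (-(muinv k)) * hmuinv k
    · simp [h]
  have hminv_u : ∀ (k i j : Fin n), i ≠ j → P (muinv k) (u i j) =
      -(u i j ^ 2 * ((-(if k = i then muinv k else 0)) - (-(if k = j then muinv k else 0)))) := by
    intro k i j hij
    have h0 : P (muinv k) ((lam i - lam j) * u i j) = 0 := by rw [hu i j hij]; exact hP1r _
    rw [hPleibR] at h0
    have hd : P (muinv k) (lam i - lam j)
        = (-(if k = i then muinv k else 0)) - (-(if k = j then muinv k else 0)) := by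
      rw [hPsubR, hminv_l, hminv_l]
    rw [hd] at h0
    have hx : (lam i - lam j) * P (muinv k) (u i j)
        = -(u i j * ((-(if k = i then muinv k else 0)) - (-(if k = j then muinv k else 0)))) := by
      linear_combination h0
    have := hcancel _ _ _ _ (hu i j hij) hx
    rw [this]; ring
  have hminv_mu : ∀ (k l : Fin n), P (muinv k) (mu l) = 0 := by
    intro k l
    have h0 : P (mu k * muinv k) (mu l) = 0 := by rw [hmuinv k, Pskew, hP1r]; ring
    rw [Pleib] at h0
    have hx : mu k * P (muinv k) (mu l) = 0 := by rw [hmm] at h0; linear_combination h0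
    have := hcancel _ _ _ _ (hmuinv k) hx
    rw [this]; ring
  have hminv_minv : ∀ (k l : Fin n), P (muinv k) (muinv l) = 0 := by
    intro k l
    have h0 : P (mu k * muinv k) (muinv l) = 0 := by rw [hmuinv k, Pskew, hP1r]; ring
    rw [Pleib] at h0
    have hmuminv : P (mu k) (muinv l) = 0 := by rw [Pskew, hminv_mu]; ring
    rw [hmuminv] at h0
    have hx : mu k * P (muinv k) (muinv l) = 0 := by linear_combination h0
    have := hcancel _ _ _ _ (hmuinv k) hx
    rw [this]; ring
  -- Stage A : brackets of the atoms with any coefficient of T.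
  -- f = P (mu k)
  have stageMu : ∀ k : Fin n, cmap (P (mu k)) T
      = C (mu k * ek lam mu muinv u k) * ∏ l ∈ univ.erase k, (X - C (lam l)) := by
    intro k
    rw [hT, generic lam mu muinv u hu (P (mu k)) (hPaddR (mu k)) (hPleibR (mu k))
      (fun l => if k = l then mu k else 0) (fun _ => 0) (hml k)
      (fun i j hij => hmu_u k i j hij)
      (fun i => by rw [hPaddR, hmm]
                   have : P (mu k) (muinv i) = 0 := by rw [Pskew, hminv_mu]; ring
                   rw [this]; ring)]
    rw [Finset.sum_eq_single k (fun l _ hlk => by simp [Ne.symm hlk])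
      (fun h => absurd (mem_univ k) h)]
    simp
  -- f = P (muinv k)
  have stageMuinv : ∀ k : Fin n, cmap (P (muinv k)) T
      = C (-(muinv k) * ek lam mu muinv u k) * ∏ l ∈ univ.erase k, (X - C (lam l)) := by
    intro k
    rw [hT, generic lam mu muinv u hu (P (muinv k)) (hPaddR (muinv k)) (hPleibR (muinv k))
      (fun l => -(if k = l then muinv k else 0)) (fun _ => 0)
      (fun l => hminv_l k l)
      (fun i j hij => hminv_u k i j hij)
      (fun i => by rw [hPaddR, hminv_mu, hminv_minv]; ring)]
    rw [Finset.sum_eq_single k (fun l _ hlk => by simp [Ne.symm hlk])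
      (fun h => absurd (mem_univ k) h)]
    simp
  -- f = P (lam k)
  have stageLam : ∀ k : Fin n, cmap (P (lam k)) T
      = (∏ j ∈ univ.erase k, ((X - C (lam j)) * C (u k j))) * C (muinv k - mu k) := by
    intro k
    rw [hT, generic lam mu muinv u hu (P (lam k)) (hPaddR (lam k)) (hPleibR (lam k))
      (fun _ => 0) (fun i => if i = k then muinv i - mu i else 0) (fun l => hll k l)
      (fun i j hij => by rw [hlu k i j hij]; ring)
      (fun i => by
        rw [hPaddR]
        have h1 : P (lam k) (mu i) = -(if i = k then mu i else 0) := by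
          rw [Pskew, hml]
        have h2 : P (lam k) (muinv i) = (if i = k then muinv i else 0) := by
          rw [Pskew, hminv_l]; ring
        rw [h1, h2]
        by_cases h : i = k
        · simp only [if_pos h]; ring
        · simp [h])]
    have h1 : (∑ l : Fin n, C ((0:A) * ek lam mu muinv u l) * ∏ l' ∈ univ.erase l, (X - C (lam l'))) = 0 := by
      simp
    have h2 : ∑ i : Fin n, (∏ j ∈ univ.erase i, ((X - C (lam j)) * C (u i j)))
          * C (if i = k then muinv i - mu i else 0)
        = (∏ j ∈ univ.erase k, ((X - C (lam j)) * C (u k j))) * C (muinv k - mu k) := by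
      rw [Finset.sum_eq_single k (fun l _ hlk => by simp [hlk])
        (fun h => absurd (mem_univ k) h)]
      simp
    rw [h1, h2, zero_add]
  -- f = P (u k m)
  have stageU : ∀ k m : Fin n, k ≠ m → cmap (P (u k m)) T
      = (∏ j ∈ univ.erase k, ((X - C (lam j)) * C (u k j))) * C (u k m ^ 2 * (mu k - muinv k))
        - (∏ j ∈ univ.erase m, ((X - C (lam j)) * C (u m j))) * C (u k m ^ 2 * (mu m - muinv m)) := by
    intro k m hkm
    rw [hT, generic lam mu muinv u hu (P (u k m)) (hPaddR (u k m)) (hPleibR (u k m))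
      (fun _ => 0)
      (fun i => (if i = k then u k m ^ 2 * (mu i - muinv i) else 0)
        - (if i = m then u k m ^ 2 * (mu i - muinv i) else 0))
      (fun l => hul k m l hkm)
      (fun i j hij => by rw [huu k m i j hkm hij]; ring)
      (fun i => by
        rw [hPaddR]
        have h1 : P (u k m) (mu i) =
            u k m ^ 2 * ((if i = k then mu i else 0) - (if i = m then mu i else 0)) := by
          rw [Pskew, hmu_u i k m hkm]; ring
        have h2 : P (u k m) (muinv i) =
            -(u k m ^ 2 * ((if i = k then muinv i else 0) - (if i = m then muinv i else 0))) := by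
          rw [Pskew, hminv_u i k m hkm]; ring
        rw [h1, h2]
        by_cases h : i = k
        · by_cases h' : i = m
          · exact absurd (h.symm.trans h') hkm
          · subst h; simp [h']; ring
        · by_cases h' : i = m
          · subst h'; simp [h]; ring
          · simp [h, h'])]
    have hzero : ∀ l : Fin n, C ((0 : A) * ek lam mu muinv u l)
        * ∏ l' ∈ univ.erase l, (X - C (lam l')) = 0 := by intro l; simp
    simp only [hzero, Finset.sum_const_zero, zero_add]
    have hsplit : ∀ i : Fin n,
        (∏ j ∈ univ.erase i, ((X - C (lam j)) * C (u i j))) *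
          C ((if i = k then u k m ^ 2 * (mu i - muinv i) else 0)
            - (if i = m then u k m ^ 2 * (mu i - muinv i) else 0))
        = (∏ j ∈ univ.erase i, ((X - C (lam j)) * C (u i j))) *
            C (if i = k then u k m ^ 2 * (mu i - muinv i) else 0)
          - (∏ j ∈ univ.erase i, ((X - C (lam j)) * C (u i j))) *
            C (if i = m then u k m ^ 2 * (mu i - muinv i) else 0) := by
      intro i; rw [map_sub]; ring
    simp only [hsplit]
    rw [Finset.sum_sub_distrib]
    congr 1
    · rw [Finset.sum_eq_single k (fun l _ hlk => by simp [hlk])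
        (fun h => absurd (mem_univ k) h)]
      simp
    · rw [Finset.sum_eq_single m (fun l _ hlm => by simp [hlm])
        (fun h => absurd (mem_univ m) h)]
      simp
  -- coefficient-level bracket values with b := T.coeff j
  intro i j _ _
  have hblam : ∀ l : Fin n, P (lam l) (T.coeff j)
      = -((mu l - muinv l) * ((∏ jj ∈ univ.erase l, ((X - C (lam jj)) * C (u l jj))).coeff j)) := by
    intro l
    rw [← cmap_coeff (P (lam l)) (hPaddR (lam l)) T j, stageLam l, coeff_mul_C]
    ring
  have hbu : ∀ k m : Fin n, k ≠ m → P (u k m) (T.coeff j)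
      = -(u k m ^ 2 *
        ((-((mu k - muinv k) * ((∏ jj ∈ univ.erase k, ((X - C (lam jj)) * C (u k jj))).coeff j)))
        - (-((mu m - muinv m) * ((∏ jj ∈ univ.erase m, ((X - C (lam jj)) * C (u m jj))).coeff j))))) := by
    intro k m hkm
    rw [← cmap_coeff (P (u k m)) (hPaddR (u k m)) T j, stageU k m hkm, coeff_sub, coeff_mul_C,
      coeff_mul_C]
    ring
  have hbm : ∀ k : Fin n, P (mu k + muinv k) (T.coeff j)
      = (mu k - muinv k) * ek lam mu muinv u k
          * ((∏ l ∈ univ.erase k, (X - C (lam l))).coeff j) := by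
    intro k
    rw [Padd]
    rw [← cmap_coeff (P (mu k)) (hPaddR (mu k)) T j, stageMu k, coeff_C_mul]
    rw [← cmap_coeff (P (muinv k)) (hPaddR (muinv k)) T j, stageMuinv k, coeff_C_mul]
    ring
  have final := generic lam mu muinv u hu (fun a => P a (T.coeff j))
    (fun x y => Padd x y _) (fun x y => Pleib x y _)
    (fun l => -((mu l - muinv l) * ((∏ jj ∈ univ.erase l, ((X - C (lam jj)) * C (u l jj))).coeff j)))
    (fun k => (mu k - muinv k) * ek lam mu muinv u k
        * ((∏ l ∈ univ.erase k, (X - C (lam l))).coeff j))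
    hblam hbu hbm
  rw [← hT] at final
  have hGH : ∀ l : Fin n, (∏ jj ∈ univ.erase l, ((X - C (lam jj)) * C (u l jj)))
      = (∏ l' ∈ univ.erase l, (X - C (lam l'))) * C (∏ l' ∈ univ.erase l, u l l') := by
    intro l; rw [Finset.prod_mul_distrib, map_prod]
  have hzero : cmap (fun a => P a (T.coeff j)) T = 0 := by
    rw [final, ← Finset.sum_add_distrib]
    refine Finset.sum_eq_zero fun k _ => ?_
    beta_reduce
    rw [hGH k, coeff_mul_C]
    simp only [map_mul, map_neg, map_sub]
    ring
  have hcoeff := cmap_coeff (fun a => P a (T.coeff j)) (fun x y => Padd x y _) T i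
  rw [hzero] at hcoeff
  simpa using hcoeff.symm
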